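/- Let m₁, m₂, m₃ > 0 be real numbers. Then the Euler quintic polynomial p(x) = (m₃+m₂)x⁵ + (3m₃+2m₂)x⁴ + (3m₃+m₂)x³ − (3m₁+m₂)x² − (3m₁+2m₂)x − (m₁+m₂) has exactly one positive real root, i.e., there is a unique x > 0 with p(x) = 0. -/
import Mathlib


/-- The Euler quintic polynomial
`p(x) = (m₃+m₂)x⁵ + (3m₃+2m₂)x⁴ + (3m₃+m₂)x³ − (3m₁+m₂)x² − (3m₁+2m₂)x − (m₁+m₂)`
has exactly one positive real root when `m₁, m₂, m₃ > 0`. -/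
theorem euler_quintic_unique_positive_root (m1 m2 m3 : ℝ)
    (hm1 : 0 < m1) (hm2 : 0 < m2) (hm3 : 0 < m3) :
    ∃! x : ℝ, 0 < x ∧
      (m3 + m2) * x ^ 5 + (3 * m3 + 2 * m2) * x ^ 4 + (3 * m3 + m2) * x ^ 3
        - (3 * m1 + m2) * x ^ 2 - (3 * m1 + 2 * m2) * x - (m1 + m2) = 0 := by
  have hm32 : 0 < m3 + m2 := by linarith
  set f : ℝ → ℝ := fun x =>
      (m3 + m2) * x ^ 5 + (3 * m3 + 2 * m2) * x ^ 4 + (3 * m3 + m2) * x ^ 3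
        - (3 * m1 + m2) * x ^ 2 - (3 * m1 + 2 * m2) * x - (m1 + m2) with hf
  -- monotonicity of f x / x^3 on (0,∞): no two distinct positive roots
  have hmono : ∀ a b : ℝ, 0 < a → 0 < b → a < b → f a = 0 → f b = 0 → False := by
    intro a b ha hb hab hfa hfb
    have key : a ^ 3 * f b - b ^ 3 * f a =
        (b - a) * ((m3 + m2) * (a ^ 3 * b ^ 3 * (a + b)) + (3 * m3 + 2 * m2) * (a ^ 3 * b ^ 3)
          + (3 * m1 + m2) * (a ^ 2 * b ^ 2) + (3 * m1 + 2 * m2) * (a * b * (a + b))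
          + (m1 + m2) * (a ^ 2 + a * b + b ^ 2)) := by
      simp only [hf]; ring
    have hba : 0 < b - a := sub_pos.mpr hab
    have habp : 0 < a + b := by linarith
    have t1 : 0 < (m3 + m2) * (a ^ 3 * b ^ 3 * (a + b)) :=
      mul_pos hm32 (mul_pos (mul_pos (pow_pos ha 3) (pow_pos hb 3)) habp)
    have t2 : 0 < (3 * m3 + 2 * m2) * (a ^ 3 * b ^ 3) :=
      mul_pos (by linarith) (mul_pos (pow_pos ha 3) (pow_pos hb 3))
    have t3 : 0 < (3 * m1 + m2) * (a ^ 2 * b ^ 2) :=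
      mul_pos (by linarith) (mul_pos (pow_pos ha 2) (pow_pos hb 2))
    have t4 : 0 < (3 * m1 + 2 * m2) * (a * b * (a + b)) :=
      mul_pos (by linarith) (mul_pos (mul_pos ha hb) habp)
    have t5 : 0 < (m1 + m2) * (a ^ 2 + a * b + b ^ 2) :=
      mul_pos (by linarith) (by positivity)
    have hpos : 0 < a ^ 3 * f b - b ^ 3 * f a := by
      rw [key]; exact mul_pos hba (by linarith)
    rw [hfa, hfb] at hpos; simp at hpos
  have huniq : ∀ a b : ℝ, 0 < a → 0 < b → f a = 0 → f b = 0 → a = b := by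
    intro a b ha hb hfa hfb
    rcases lt_trichotomy a b with h | h | h
    · exact absurd (hmono a b ha hb h hfa hfb) (not_false)
    · exact h
    · exact absurd (hmono b a hb ha h hfb hfa) (not_false)
  -- existence via IVT
  obtain ⟨c, hc1, hcratio⟩ : ∃ c : ℝ, 1 ≤ c ∧ 7 * m1 + 4 * m2 < (m3 + m2) * c := by
    refine ⟨1 + (7 * m1 + 4 * m2) / (m3 + m2), by have := div_nonneg (by linarith : (0:ℝ) ≤ 7*m1+4*m2) hm32.le; linarith, ?_⟩
    have : (m3 + m2) * ((7 * m1 + 4 * m2) / (m3 + m2)) = 7 * m1 + 4 * m2 := by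
      field_simp
    nlinarith
  have hcont : ContinuousOn f (Set.Icc 0 c) := by
    apply Continuous.continuousOn; fun_prop
  have hcp : (0:ℝ) < c := lt_of_lt_of_le one_pos hc1
  have hf0 : f 0 < 0 := by simp [hf]; linarith
  have hfc : 0 < f c := by
    simp only [hf]
    have hc2 : c ≤ c ^ 2 := by nlinarith
    have h1c2 : 1 ≤ c ^ 2 := by nlinarith
    have hc35 : c ^ 3 ≤ c ^ 5 := by nlinarith [pow_pos hcp 3, sq_nonneg c]
    nlinarith [mul_lt_mul_of_pos_right hcratio (pow_pos hcp 2),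
      mul_le_mul_of_nonneg_left hc35 (le_of_lt hm32),
      mul_pos (by linarith : (0:ℝ) < 3 * m3 + 2 * m2) (pow_pos hcp 4),
      mul_pos (by linarith : (0:ℝ) < 3 * m3 + m2) (pow_pos hcp 3),
      mul_le_mul_of_nonneg_left hc2 (by linarith : (0:ℝ) ≤ 3 * m1 + 2 * m2),
      mul_le_mul_of_nonneg_left h1c2 (by linarith : (0:ℝ) ≤ m1 + m2)]
  have hmem : (0:ℝ) ∈ Set.Ioo (f 0) (f c) := ⟨hf0, hfc⟩
  obtain ⟨x, hx, hfx⟩ := intermediate_value_Ioo (le_of_lt hcp) hcont hmem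
  exact ⟨x, ⟨hx.1, hfx⟩, fun y hy => huniq y x hy.1 hx.1 hy.2 hfx⟩
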